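/- Let p, q be coprime integers with 0 < p < q, let b be an integer with 0 ≤ b ≤ q − 1, let s ∈ {1, …, q}, and let h be the unique index with b_h ≤ b < b_{h+1} (with the convention b_{k̄+1} = q and p_{k̄} = 0). Then the least integer n ≥ 1 such that σ_b^n(s) = s (the period of the s-th root of the curve (w − 1)^(q−p) · w^p · ξ^q = 1 along a circle enclosing the first b branch points) equals: (i) P_{h−2} + (⌊(b − b_h − 1)/p_h⌋ + 1)·P_{h−1} if l_h(s) ≤ b − b_h + p_h and (b − b_h) mod~ p_h < l_h(s) mod~ p_h; (ii) P_{h−2} + (⌊(b − b_h − 1)/p_h⌋ + 2)·P_{h−1} if l_h(s) ≤ b − b_h + p_h and (b − b_h) mod~ p_h ≥ l_h(s) mod~ p_h; (iii) P_{h−1} if l_h(s) > b − b_h + p_h. Here ⌊·/·⌋ is floor division of integers (so ⌊(−1)/p_h⌋ = −1 when b = b_h). -/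

import Mathlib

/-- The pair (q_k, p_k): q_0 = q, p_0 = q - p, q_{k+1} = p_k, p_{k+1} = q_k mod p_k
(with the convention n mod 0 = n, as in Lean's `Nat.mod`). -/
def qpSeq (q p : ℕ) : ℕ → ℕ × ℕ
  | 0 => (q, q - p)
  | k + 1 => ((qpSeq q p k).2, (qpSeq q p k).1 % (qpSeq q p k).2)

/-- The partial quotients a_k = ⌊q_k / p_k⌋. -/
def aSeq (q p k : ℕ) : ℕ := (qpSeq q p k).1 / (qpSeq q p k).2

/-- The branch-point-count thresholds: b_0 = 0, b_{k+1} = b_k + q_k - p_k. -/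
def bSeq (q p : ℕ) : ℕ → ℕ
  | 0 => 0
  | k + 1 => bSeq q p k + ((qpSeq q p k).1 - (qpSeq q p k).2)

/-- Numerators of the convergents of the continued fraction of q/(q-p), shifted
so that `Pseq q p n` is P_{n-2}: P_{-2} = 0, P_{-1} = 1, P_n = a_n P_{n-1} + P_{n-2}. -/
def Pseq (q p : ℕ) : ℕ → ℤ
  | 0 => 0
  | 1 => 1
  | n + 2 => (aSeq q p n : ℤ) * Pseq q p (n + 1) + Pseq q p n

/-- a mod~ b : equals a mod b if this is nonzero, and b otherwise. -/
def amod (a b : ℕ) : ℕ := if a % b = 0 then b else a % b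

/-- l_0(s) = s, l_h(s) = l_{h-1}(s) mod~ p_{h-1}. -/
def lSeq (q p s : ℕ) : ℕ → ℕ
  | 0 => s
  | h + 1 => amod (lSeq q p s h) (qpSeq q p h).2

/-- The transposition τ_j of {1,…,q} exchanging j and (j + q - p) mod~ q. -/
def tau (q p j : ℕ) : Equiv.Perm ℕ := Equiv.swap j (amod (j + q - p) q)

/-- The monodromy permutation σ_b = τ_b ∘ ⋯ ∘ τ_1 (τ_1 applied first, σ_0 = id). -/
def sigma (q p : ℕ) : ℕ → Equiv.Perm ℕ
  | 0 => 1
  | b + 1 => tau q p (b + 1) * sigma q p b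

section amodLemmas

lemma amod_le {a b : ℕ} (hb : 0 < b) : amod a b ≤ b := by
  unfold amod; split
  · exact le_refl b
  · exact le_of_lt (Nat.mod_lt _ hb)

lemma amod_pos {a b : ℕ} (hb : 0 < b) : 0 < amod a b := by
  unfold amod; split
  · exact hb
  · omega

lemma amod_mod {a b : ℕ} : amod a b % b = a % b := by
  unfold amod; split
  · rw [Nat.mod_self]; omega
  · exact Nat.mod_mod_of_dvd _ dvd_rfl

lemma amod_eq_of_mod_eq {a a' b : ℕ} (h : a % b = a' % b) : amod a b = amod a' b := by
  unfold amod; rw [h]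

lemma amod_of_le {a b : ℕ} (ha : 1 ≤ a) (hab : a ≤ b) : amod a b = a := by
  unfold amod
  rcases eq_or_lt_of_le hab with rfl | hlt
  · rw [Nat.mod_self]; simp
  · rw [Nat.mod_eq_of_lt hlt]
    have : ¬ (a = 0) := by omega
    simp [this]

lemma amod_mem {a b : ℕ} (hb : 0 < b) : 1 ≤ amod a b ∧ amod a b ≤ b :=
  ⟨amod_pos hb, amod_le hb⟩

lemma amod_eq_iff {a b t : ℕ} (hb : 0 < b) (ht1 : 1 ≤ t) (ht2 : t ≤ b) :
    amod a b = t ↔ a % b = t % b := by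
  constructor
  · rintro rfl; exact amod_mod.symm
  · intro h
    have h2 : amod a b % b = t % b := amod_mod.trans h
    have l1 := amod_pos (a := a) hb
    have l2 := amod_le (a := a) hb
    rcases eq_or_lt_of_le ht2 with rfl | hlt
    · rcases eq_or_lt_of_le l2 with he | hl
      · exact he
      · rw [Nat.mod_self, Nat.mod_eq_of_lt hl] at h2; omega
    · rw [Nat.mod_eq_of_lt hlt] at h2
      rcases eq_or_lt_of_le l2 with he | hl
      · rw [he, Nat.mod_self] at h2; omega
      · rwa [Nat.mod_eq_of_lt hl] at h2

end amodLemmas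

open Relation

/-- The edge relation of the branch-point graph: `j ↔ (j+q-p) mod~ q` for `1 ≤ j ≤ b`. -/
def Erel (q p b : ℕ) (x y : ℕ) : Prop :=
  ∃ j, 1 ≤ j ∧ j ≤ b ∧
    ((x = j ∧ y = amod (j + q - p) q) ∨ (y = j ∧ x = amod (j + q - p) q))

lemma Erel.symm' {q p b x y : ℕ} (h : Erel q p b x y) : Erel q p b y x := by
  obtain ⟨j, h1, h2, h3⟩ := h
  exact ⟨j, h1, h2, h3.symm.imp (fun h => h) (fun h => h)⟩

lemma Erel.mono {q p b b' x y : ℕ} (hb : b ≤ b') (h : Erel q p b x y) : Erel q p b' x y := by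
  obtain ⟨j, h1, h2, h3⟩ := h
  exact ⟨j, h1, le_trans h2 hb, h3⟩

lemma eqvGen_map {α β : Type*} {r : α → α → Prop} {r' : β → β → Prop} (f : α → β)
    (hf : ∀ a b, r a b → EqvGen r' (f a) (f b)) :
    ∀ {x y}, EqvGen r x y → EqvGen r' (f x) (f y) := by
  intro x y h
  induction h with
  | rel a b hab => exact hf a b hab
  | refl a => exact .refl _
  | symm a b _ ih => exact ih.symm _ _
  | trans a b c _ _ ih1 ih2 => exact ih1.trans _ _ _ ih2

lemma eqvGen_eq_of_untouched {α : Type*} {r : α → α → Prop} {y : α}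
    (hy : ∀ z, ¬ r z y ∧ ¬ r y z) {x : α} (h : EqvGen r x y) : x = y := by
  suffices H : ∀ a b, EqvGen r a b → (a = y → b = y) ∧ (b = y → a = y) by
    exact (H x y h).2 rfl
  intro a b hab
  induction hab with
  | rel a b hab =>
    constructor
    · rintro rfl; exact absurd hab (hy b).2
    · rintro rfl; exact absurd hab (hy a).1
  | refl a => exact ⟨id, id⟩
  | symm a b _ ih => exact ⟨ih.2, ih.1⟩
  | trans a b c _ _ ih1 ih2 => exact ⟨fun h => ih2.1 (ih1.1 h), fun h => ih1.2 (ih2.2 h)⟩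

section Graph

variable {q p : ℕ}

/-- no-wrap edge: for `j ≤ p`, `τ_j` exchanges `j` and `j + (q-p)`. -/
lemma amod_nowrap (hpq : p ≤ q) {j : ℕ} (hj1 : 1 ≤ j) (hjp : j ≤ p) :
    amod (j + q - p) q = j + (q - p) := by
  have h : j + q - p = j + (q - p) := by omega
  rw [h]
  exact amod_of_le (by omega) (by omega)

/-- wrap edge: for `p < j ≤ q`, `τ_j` exchanges `j` and `j - p`. -/
lemma amod_wrap (hp : 0 < p) {j : ℕ} (hj : p < j) (hjq : j ≤ q) :
    amod (j + q - p) q = j - p := by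
  have h : j + q - p = (j - p) + q := by omega
  rw [h]
  have h2 : ((j - p) + q) % q = (j - p) % q := Nat.add_mod_right _ _
  have h3 : (j - p) % q = j - p := Nat.mod_eq_of_lt (by omega)
  rw [amod_eq_iff (by omega) (by omega) (by omega), h2, h3]

lemma conn_step (hpq : p ≤ q) (b j : ℕ) (hj1 : 1 ≤ j) (hjp : j ≤ p) (hjb : j ≤ b) :
    EqvGen (Erel q p b) j (j + (q - p)) := by
  refine EqvGen.rel _ _ ⟨j, hj1, hjb, Or.inl ⟨rfl, ?_⟩⟩
  exact (amod_nowrap hpq hj1 hjp).symm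

lemma wrap_step (hp : 0 < p) (b j : ℕ) (hj : p < j) (hjq : j ≤ q) (hjb : j ≤ b) :
    EqvGen (Erel q p b) j (j - p) := by
  refine EqvGen.rel _ _ ⟨j, by omega, hjb, Or.inl ⟨rfl, ?_⟩⟩
  exact (amod_wrap hp hj hjq).symm

/-- within-fiber connection, valid for all `u ≤ min (b+d) q`  -/
lemma fib_conn (hp : 0 < p) (hpq : p < q) {b : ℕ} :
    ∀ u, 1 ≤ u → u ≤ q → u ≤ b + (q - p) → EqvGen (Erel q p b) u (amod u (q - p)) := by
  intro u
  induction u using Nat.strong_induction_on with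
  | _ u ih =>
    intro hu1 huq hub
    by_cases hud : u ≤ q - p
    · rw [amod_of_le hu1 hud]; exact EqvGen.refl _
    · have hj1 : 1 ≤ u - (q - p) := by omega
      have hjp : u - (q - p) ≤ p := by omega
      have hjb : u - (q - p) ≤ b := by omega
      have step := conn_step (le_of_lt hpq) b _ hj1 hjp hjb
      have hrw : u - (q - p) + (q - p) = u := by omega
      rw [hrw] at step
      have ihu := ih (u - (q - p)) (by omega) hj1 (by omega) (by omega)
      have hmod : amod (u - (q - p)) (q - p) = amod u (q - p) := by
        apply amod_eq_of_mod_eq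
        conv_rhs => rw [← hrw]
        rw [Nat.add_mod_right]
      exact (step.symm _ _).trans _ _ _ (hmod ▸ ihu)

end Graph

section Base

/-- Base-case (b < p) component description -/
lemma base_eqv (hp : 0 < p) (hpq : p < q) {b : ℕ} (hb : b < p) (x y : ℕ) :
    EqvGen (Erel q p b) x y ↔ (x = y ∨ (1 ≤ x ∧ x ≤ b + (q - p) ∧ 1 ≤ y ∧ y ≤ b + (q - p)
      ∧ x % (q - p) = y % (q - p))) := by
  set d := q - p with hd
  set R : ℕ → ℕ → Prop := fun x y => x = y ∨ (1 ≤ x ∧ x ≤ b + d ∧ 1 ≤ y ∧ y ≤ b + d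
      ∧ x % d = y % d) with hR
  have hREq : Equivalence R := by
    constructor
    · intro a; exact Or.inl rfl
    · rintro a b (rfl | ⟨h1, h2, h3, h4, h5⟩)
      · exact Or.inl rfl
      · exact Or.inr ⟨h3, h4, h1, h2, h5.symm⟩
    · rintro a b c (rfl | hab) (rfl | hbc)
      · exact Or.inl rfl
      · exact Or.inr hbc
      · exact Or.inr hab
      · exact Or.inr ⟨hab.1, hab.2.1, hbc.2.2.1, hbc.2.2.2.1, hab.2.2.2.2.trans hbc.2.2.2.2⟩
  constructor
  · intro h
    have hmap := eqvGen_map (r := Erel q p b) (r' := R) id (fun a b' hab => by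
      obtain ⟨j, hj1, hjb, hor⟩ := hab
      have hjp : j ≤ p := by omega
      have ham : amod (j + q - p) q = j + d := amod_nowrap (le_of_lt hpq) hj1 hjp
      have hedge : R j (j + d) := Or.inr ⟨hj1, by omega, by omega, by omega, by
        rw [Nat.add_mod_right]⟩
      rcases hor with ⟨rfl, rfl⟩ | ⟨rfl, rfl⟩
      · rw [ham]; exact EqvGen.rel _ _ hedge
      · rw [ham]; exact EqvGen.rel _ _ (hREq.symm hedge)) h
    exact (hREq.eqvGen_iff).mp hmap
  · rintro (rfl | ⟨h1, h2, h3, h4, h5⟩)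
    · exact EqvGen.refl _
    · have hbd : b + d ≤ q := by omega
      have cx := fib_conn hp hpq x h1 (by omega) h2
      have cy := fib_conn hp hpq y h3 (by omega) h4
      have : amod x d = amod y d := amod_eq_of_mod_eq h5
      rw [this] at cx
      exact cx.trans _ _ _ (cy.symm _ _)

end Base

section Renorm

variable {q p : ℕ}

/-- p ≡ q mod (q-p) -/
lemma p_mod (hpq : p ≤ q) : p % (q - p) = q % (q - p) := by
  have h : q = p + (q - p) := by omega
  calc p % (q - p) = (p + (q - p)) % (q - p) := (Nat.add_mod_right _ _).symm
    _ = q % (q - p) := by rw [← h]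

lemma add_mod_congr {n a b c : ℕ} (h : a % n = b % n) : (c + a) % n = (c + b) % n := by
  rw [Nat.add_mod, h, ← Nat.add_mod]

/-- Renormalization of the graph: components of `G(q,p,p+c)` are the `amod · (q-p)`
preimages of components of `G(q-p, (q-p) - q%(q-p), c)`. -/
lemma geq (hp : 0 < p) (hpq : p < q) {c : ℕ} (hc : c ≤ q - p - 1) {x y : ℕ}
    (hx1 : 1 ≤ x) (hxq : x ≤ q) (hy1 : 1 ≤ y) (hyq : y ≤ q) :
    EqvGen (Erel q p (p + c)) x y ↔
      EqvGen (Erel (q - p) ((q - p) - q % (q - p)) c) (amod x (q - p)) (amod y (q - p)) := by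
  set d := q - p with hd
  set r := q % d with hr
  set p' := d - r with hp'
  have hd1 : 1 ≤ d := by omega
  have hrd : r < d := Nat.mod_lt _ (by omega)
  have hdr : d - p' = r := by omega
  constructor
  · intro h
    refine eqvGen_map (f := fun z => amod z d) ?_ h
    intro a b' hab
    have aux : ∀ j, 1 ≤ j → j ≤ p + c →
        EqvGen (Erel d p' c) (amod j d) (amod (amod (j + q - p) q) d) := by
      intro j hj1 hjpc
      by_cases hjp : j ≤ p
      · rw [amod_nowrap (le_of_lt hpq) hj1 hjp]
        have : amod (j + d) d = amod j d := amod_eq_of_mod_eq (Nat.add_mod_right _ _)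
        rw [show j + (q - p) = j + d from rfl, this]
        exact EqvGen.refl _
      · push_neg at hjp
        have hjq : j ≤ q := by omega
        rw [amod_wrap hp hjp hjq]
        set i := j - p with hi
        have hi1 : 1 ≤ i := by omega
        have hic : i ≤ c := by omega
        have hamodi : amod i d = i := amod_of_le hi1 (by omega)
        have hpr : p % d = r % d := by
          rw [p_mod (le_of_lt hpq), Nat.mod_eq_of_lt hrd]
        have hkey : amod j d = amod (i + d - p') d := by
          apply amod_eq_of_mod_eq
          have h1 : i + d - p' = i + r := by omega
          have h2 : j = i + p := by omega
          rw [h1, h2]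
          exact add_mod_congr hpr
        have hedge : Erel d p' c i (amod (i + d - p') d) := ⟨i, hi1, hic, Or.inl ⟨rfl, rfl⟩⟩
        rw [hamodi, hkey]
        exact (EqvGen.rel _ _ hedge).symm _ _
    obtain ⟨j, hj1, hjb, hor⟩ := hab
    rcases hor with ⟨ha, hb2⟩ | ⟨ha, hb2⟩
    · rw [ha, hb2]; exact aux j hj1 hjb
    · rw [ha, hb2]; exact (aux j hj1 hjb).symm _ _
  · intro h
    have hfib : ∀ u, 1 ≤ u → u ≤ q → EqvGen (Erel q p (p + c)) u (amod u d) := by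
      intro u hu1 huq
      exact fib_conn hp hpq u hu1 huq (by omega)
    have hlift : ∀ a b', Erel d p' c a b' → EqvGen (Erel q p (p + c)) a b' := by
      have haux : ∀ j', 1 ≤ j' → j' ≤ c →
          EqvGen (Erel q p (p + c)) j' (amod (j' + d - p') d) := by
        intro j' hj1 hjc
        have hw := wrap_step (q := q) hp (p + c) (j' + p) (by omega) (by omega) (by omega)
        have : j' + p - p = j' := by omega
        rw [this] at hw
        have hf := hfib (j' + p) (by omega) (by omega)
        have hpr : p % d = r % d := by
          rw [p_mod (le_of_lt hpq), Nat.mod_eq_of_lt hrd]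
        have : amod (j' + p) d = amod (j' + d - p') d := by
          apply amod_eq_of_mod_eq
          have h1 : j' + d - p' = j' + r := by omega
          rw [h1]
          exact add_mod_congr hpr
        rw [this] at hf
        exact (hw.symm _ _).trans _ _ _ hf
      intro a b' hab
      obtain ⟨j', hj1, hjc, hor⟩ := hab
      rcases hor with ⟨ha, hb2⟩ | ⟨ha, hb2⟩
      · rw [ha, hb2]; exact haux j' hj1 hjc
      · rw [ha, hb2]; exact (haux j' hj1 hjc).symm _ _
    have hmid := eqvGen_map (f := id) hlift h
    simp only [id] at hmid
    exact ((hfib x hx1 hxq).trans _ _ _ hmid).trans _ _ _ ((hfib y hy1 hyq).symm _ _)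

end Renorm

/-- endpoints of the next transposition are never already connected -/
theorem nc : ∀ q p m : ℕ, 0 < p → p < q → Nat.Coprime p q → 1 ≤ m → m ≤ q - 1 →
    ¬ EqvGen (Erel q p (m - 1)) m (amod (m + q - p) q) := by
  intro q
  induction q using Nat.strong_induction_on with
  | _ q IH =>
    intro p m hp hpq hcop hm1 hm2 hcon
    by_cases hmp : m ≤ p
    · -- untouched endpoint
      rw [amod_nowrap (le_of_lt hpq) hm1 hmp] at hcon
      set y := m + (q - p) with hy
      have huntouched : ∀ z, ¬ Erel q p (m - 1) z y ∧ ¬ Erel q p (m - 1) y z := by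
        have key : ∀ z w, Erel q p (m - 1) z w → z ≠ y ∧ w ≠ y := by
          intro z w hzw
          obtain ⟨j, hj1, hjb, hor⟩ := hzw
          have hjp : j ≤ p := by omega
          have ham : amod (j + q - p) q = j + (q - p) := amod_nowrap (le_of_lt hpq) hj1 hjp
          rcases hor with ⟨hz, hw⟩ | ⟨hw, hz⟩ <;>
            (rw [hz, hw, ham]; constructor <;> omega)
        intro z
        exact ⟨fun hc => ((key _ _ hc).2 rfl), fun hc => ((key _ _ hc).1 rfl)⟩
      have := eqvGen_eq_of_untouched huntouched hcon
      omega
    · push_neg at hmp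
      have hd2 : 2 ≤ q - p := by omega
      set d := q - p with hd
      set r := q % d with hr
      set p' := d - r with hp2
      have hrd : r < d := Nat.mod_lt _ (by omega)
      -- coprimality chain
      have hdq : Nat.Coprime d q := by
        have h1 : Nat.Coprime d p := (Nat.coprime_sub_self_left (le_of_lt hpq)).mpr hcop.symm
        have h2 : q = p + d := by omega
        rw [h2]
        exact Nat.coprime_add_self_right.mpr h1
      have hrdco : Nat.Coprime r d := by
        unfold Nat.Coprime
        rw [hr, ← Nat.gcd_rec]
        exact hdq
      have hr1 : 1 ≤ r := by
        rcases Nat.eq_zero_or_pos r with h0 | h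
        · exfalso
          have := hrdco
          rw [h0] at this
          have : d = 1 := by simpa [Nat.Coprime] using this
          omega
        · exact h
      have hp'1 : 0 < p' := by omega
      have hp'd : p' < d := by omega
      have hcop' : Nat.Coprime p' d := by
        have h1 : Nat.Coprime p' r := (Nat.coprime_sub_self_left (le_of_lt hrd)).mpr hrdco.symm
        have h2 : d = r + p' := by omega
        rw [h2]
        exact Nat.coprime_add_self_right.mpr h1
      -- rewrite the connection via renormalization
      set m' := m - p with hm'
      have hm'1 : 1 ≤ m' := by omega
      have hm'd : m' ≤ d - 1 := by omega
      have hwrap : amod (m + q - p) q = m - p := amod_wrap hp hmp (by omega)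
      rw [hwrap] at hcon
      have hsplit : m - 1 = p + (m' - 1) := by omega
      rw [hsplit] at hcon
      have hgeq := (geq hp hpq (c := m' - 1) (by omega) (x := m) (y := m - p)
        (by omega) (by omega) (by omega) (by omega)).mp hcon
      -- identify the residues
      have hamod1 : amod (m - p) d = m' := by
        rw [← hm']
        exact amod_of_le hm'1 (by omega)
      have hamod2 : amod m d = amod (m' + d - p') d := by
        apply amod_eq_of_mod_eq
        have h1 : m' + d - p' = m' + r := by omega
        have h2 : m = m' + p := by omega
        have hpr : p % d = r % d := by
          rw [p_mod (le_of_lt hpq), Nat.mod_eq_of_lt hrd]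
        rw [h1, h2]
        exact add_mod_congr hpr
      rw [hamod1, hamod2] at hgeq
      exact IH d (by omega) p' m' hp'1 hp'd hcop' hm'1 hm'd (hgeq.symm _ _)

-- ===================== permutation side =====================

open Equiv Equiv.Perm

section PermLemmas

variable {r : ℕ → ℕ → Prop}

lemma eqvGen_pow_apply {σ : Equiv.Perm ℕ} (h : ∀ z, EqvGen r z (σ z)) :
    ∀ (n : ℕ) (z : ℕ), EqvGen r z ((σ ^ n) z) := by
  intro n
  induction n with
  | zero => intro z; simp only [pow_zero, Equiv.Perm.one_apply]; exact EqvGen.refl _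
  | succ n ih =>
    intro z
    have : (σ ^ (n + 1)) z = (σ ^ n) (σ z) := by
      rw [pow_succ, Equiv.Perm.mul_apply]
    rw [this]
    exact (h z).trans _ _ _ (ih (σ z))

lemma eqvGen_zpow_apply {σ : Equiv.Perm ℕ} (h : ∀ z, EqvGen r z (σ z)) :
    ∀ (n : ℤ) (z : ℕ), EqvGen r z ((σ ^ n) z) := by
  intro n z
  cases n with
  | ofNat n => rw [Int.ofNat_eq_coe, zpow_natCast]; exact eqvGen_pow_apply h n z
  | negSucc n =>
    rw [zpow_negSucc, ← inv_pow]
    have h' : ∀ w, EqvGen r w (σ⁻¹ w) := by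
      intro w
      have := h (σ⁻¹ w)
      rw [← Equiv.Perm.mul_apply, mul_inv_cancel, Equiv.Perm.one_apply] at this
      exact this.symm _ _
    exact eqvGen_pow_apply h' (n + 1) z

lemma sameCycle_to_eqvGen {σ : Equiv.Perm ℕ} (h : ∀ z, EqvGen r z (σ z)) {x y : ℕ}
    (hxy : σ.SameCycle x y) : EqvGen r x y := by
  obtain ⟨i, hi⟩ := hxy
  exact hi ▸ eqvGen_zpow_apply h i x

/-- merging two cycles with a transposition: new edge endpoints become same-cycle -/
lemma mergeA {σ : Equiv.Perm ℕ} {x y : ℕ} (hper : ∃ k, 0 < k ∧ (σ ^ k) x = x)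
    (hxy : ¬ σ.SameCycle x y) : (Equiv.swap x y * σ).SameCycle x y := by
  set ρ := Equiv.swap x y * σ with hρ
  have claim : ∀ m : ℕ, (∀ i, 1 ≤ i → i ≤ m → (σ ^ i) x ≠ x) → (ρ ^ m) x = (σ ^ m) x := by
    intro m
    induction m with
    | zero => intro _; simp
    | succ m ih =>
      intro hno
      have h1 : (ρ ^ (m + 1)) x = ρ ((ρ ^ m) x) := by rw [pow_succ', Equiv.Perm.mul_apply]
      have h2 : (σ ^ (m + 1)) x = σ ((σ ^ m) x) := by rw [pow_succ', Equiv.Perm.mul_apply]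
      rw [h1, ih (fun i hi1 hi2 => hno i hi1 (by omega)), hρ, Equiv.Perm.mul_apply, ← h2]
      apply Equiv.swap_apply_of_ne_of_ne
      · exact hno (m + 1) (by omega) (le_refl _)
      · intro hy
        apply hxy
        refine ⟨((m + 1 : ℕ) : ℤ), ?_⟩
        rw [zpow_natCast]
        exact hy
  have hex : ∃ k, 0 < k ∧ (σ ^ k) x = x := hper
  classical
  let n := Nat.find hex
  have hn := Nat.find_spec hex
  have hmin : ∀ i, i < n → ¬ (0 < i ∧ (σ ^ i) x = x) := fun i hi => Nat.find_min hex hi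
  have hn1 : 1 ≤ n := hn.1
  have hclaim := claim (n - 1) (fun i hi1 hi2 => by
    intro hfix
    exact hmin i (by omega) ⟨by omega, hfix⟩)
  refine ⟨(n : ℤ), ?_⟩
  rw [zpow_natCast]
  have hstep : (ρ ^ n) x = ρ ((ρ ^ (n - 1)) x) := by
    conv_lhs => rw [show n = (n - 1) + 1 by omega]
    rw [pow_succ', Equiv.Perm.mul_apply]
  rw [hstep, hclaim, hρ, Equiv.Perm.mul_apply]
  have hstep2 : σ ((σ ^ (n - 1)) x) = (σ ^ n) x := by
    conv_rhs => rw [show n = (n - 1) + 1 by omega]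
    rw [pow_succ', Equiv.Perm.mul_apply]
  rw [hstep2, hn.2, Equiv.swap_apply_left]

lemma mergeB {σ : Equiv.Perm ℕ} {x y : ℕ} (hxy : (Equiv.swap x y * σ).SameCycle x y)
    {u v : ℕ} (huv : σ.SameCycle u v) : (Equiv.swap x y * σ).SameCycle u v := by
  set ρ := Equiv.swap x y * σ with hρ
  have step : ∀ w, ρ.SameCycle w (σ w) := by
    intro w
    have hρw : ρ w = Equiv.swap x y (σ w) := by rw [hρ, Equiv.Perm.mul_apply]
    by_cases h1 : σ w = x
    · have : ρ w = y := by rw [hρw, h1, Equiv.swap_apply_left]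
      have hw : ρ.SameCycle w y := ⟨1, by rw [zpow_one]; exact this⟩
      rw [h1]
      exact hw.trans hxy.symm
    · by_cases h2 : σ w = y
      · have : ρ w = x := by rw [hρw, h2, Equiv.swap_apply_right]
        have hw : ρ.SameCycle w x := ⟨1, by rw [zpow_one]; exact this⟩
        rw [h2]
        exact hw.trans hxy
      · have : ρ w = σ w := by rw [hρw, Equiv.swap_apply_of_ne_of_ne h1 h2]
        exact ⟨1, by rw [zpow_one]; exact this⟩
  have natcase : ∀ (m : ℕ) (w : ℕ), ρ.SameCycle w ((σ ^ m) w) := by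
    intro m
    induction m with
    | zero =>
      intro w
      simp only [pow_zero, Equiv.Perm.one_apply]
      exact Equiv.Perm.SameCycle.refl _ _
    | succ m ih =>
      intro w
      have : (σ ^ (m + 1)) w = (σ ^ m) (σ w) := by rw [pow_succ, Equiv.Perm.mul_apply]
      rw [this]
      exact (step w).trans (ih (σ w))
  obtain ⟨i, hi⟩ := huv
  rcases le_or_gt 0 i with hpos | hneg
  · have : (σ ^ i.toNat) u = v := by rw [← zpow_natCast, Int.toNat_of_nonneg hpos]; exact hi
    exact this ▸ natcase i.toNat u
  · have hvu : (σ ^ (-i).toNat) v = u := by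
      rw [← zpow_natCast, Int.toNat_of_nonneg (by omega)]
      rw [← hi, ← Equiv.Perm.mul_apply, ← zpow_add]
      simp
    exact (hvu ▸ natcase (-i).toNat v).symm
end PermLemmas

section SigmaLemmas

variable {q p : ℕ}

lemma amod_range (hq : 0 < q) (a : ℕ) : 1 ≤ amod a q ∧ amod a q ≤ q :=
  ⟨amod_pos hq, amod_le hq⟩

lemma sigma_fix_outside (hq : 0 < q) {b : ℕ} (hb : b ≤ q) {z : ℕ}
    (hz : z = 0 ∨ q < z) : sigma q p b z = z := by
  induction b with
  | zero => rfl
  | succ b ih =>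
    have hb' : b ≤ q := by omega
    show (tau q p (b + 1) * sigma q p b) z = z
    rw [Equiv.Perm.mul_apply, ih hb']
    unfold tau
    apply Equiv.swap_apply_of_ne_of_ne
    · omega
    · have := amod_range hq (b + 1 + q - p)
      omega

lemma sigma_maps (hq : 0 < q) {b : ℕ} (hb : b ≤ q) {z : ℕ} (hz1 : 1 ≤ z) (hz2 : z ≤ q) :
    1 ≤ sigma q p b z ∧ sigma q p b z ≤ q := by
  by_contra hcon
  have hout : sigma q p b z = 0 ∨ q < sigma q p b z := by omega
  have := sigma_fix_outside (p := p) hq hb hout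
  have heq : sigma q p b (sigma q p b z) = sigma q p b z := this
  have := (sigma q p b).injective heq
  omega

lemma sigma_periodic (hq : 0 < q) {b : ℕ} (hb : b ≤ q) (z : ℕ) :
    ∃ k, 0 < k ∧ ((sigma q p b) ^ k) z = z := by
  by_cases hz : 1 ≤ z ∧ z ≤ q
  · -- pigeonhole among iterates
    have hmaps : ∀ n : ℕ, 1 ≤ ((sigma q p b) ^ n) z ∧ ((sigma q p b) ^ n) z ≤ q := by
      intro n
      induction n with
      | zero => simpa using hz
      | succ n ih =>
        have : ((sigma q p b) ^ (n + 1)) z = sigma q p b (((sigma q p b) ^ n) z) := by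
          rw [pow_succ', Equiv.Perm.mul_apply]
        rw [this]
        exact sigma_maps hq hb ih.1 ih.2
    have hcard : (Finset.Icc 1 q).card < (Finset.range (q + 1)).card := by
      rw [Nat.card_Icc, Finset.card_range]
      omega
    obtain ⟨i, hi, j, hj, hne, heq⟩ := Finset.exists_ne_map_eq_of_card_lt_of_maps_to hcard
      (f := fun n => ((sigma q p b) ^ n) z)
      (fun n _ => by simpa [Finset.mem_Icc] using hmaps n)
    rcases Nat.lt_or_ge i j with hij | hij
    · refine ⟨j - i, by omega, ?_⟩
      have hsplit : (sigma q p b) ^ j = (sigma q p b) ^ i * (sigma q p b) ^ (j - i) := by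
        rw [← pow_add]
        congr 1
        omega
      rw [hsplit, Equiv.Perm.mul_apply] at heq
      exact ((sigma q p b) ^ i).injective heq.symm
    · have hij' : j < i := by omega
      refine ⟨i - j, by omega, ?_⟩
      have hsplit : (sigma q p b) ^ i = (sigma q p b) ^ j * (sigma q p b) ^ (i - j) := by
        rw [← pow_add]
        congr 1
        omega
      rw [hsplit, Equiv.Perm.mul_apply] at heq
      exact ((sigma q p b) ^ j).injective heq
  · refine ⟨1, by omega, ?_⟩
    rw [pow_one]
    exact sigma_fix_outside hq hb (by omega)

lemma edges_step (hq : 0 < q) {b : ℕ} (hb : b ≤ q) :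
    ∀ z, EqvGen (Erel q p b) z (sigma q p b z) := by
  induction b with
  | zero => intro z; exact EqvGen.refl _
  | succ b ih =>
    intro z
    have hb' : b ≤ q := by omega
    have h1 : EqvGen (Erel q p (b + 1)) z (sigma q p b z) :=
      eqvGen_map (f := id) (fun a b' hab => EqvGen.rel _ _ (hab.mono (by omega))) (ih hb' z)
    set w := sigma q p b z with hw
    have h2 : EqvGen (Erel q p (b + 1)) w (sigma q p (b + 1) z) := by
      show EqvGen (Erel q p (b + 1)) w ((tau q p (b + 1) * sigma q p b) z)
      rw [Equiv.Perm.mul_apply, ← hw]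
      unfold tau
      by_cases hw1 : w = b + 1
      · rw [hw1, Equiv.swap_apply_left]
        exact EqvGen.rel _ _ ⟨b + 1, by omega, le_refl _, Or.inl ⟨rfl, rfl⟩⟩
      · by_cases hw2 : w = amod (b + 1 + q - p) q
        · rw [hw2, Equiv.swap_apply_right]
          exact (EqvGen.rel _ _ ⟨b + 1, by omega, le_refl _, Or.inl ⟨rfl, rfl⟩⟩).symm _ _
        · rw [Equiv.swap_apply_of_ne_of_ne hw1 hw2]
          exact EqvGen.refl _
    exact h1.trans _ _ _ h2

/-- The key dynamical fact: cycles of σ_b = components of the graph. -/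
theorem sc_iff (hp : 0 < p) (hpq : p < q) (hcop : Nat.Coprime p q) :
    ∀ b, b ≤ q - 1 → ∀ x y, (sigma q p b).SameCycle x y ↔ EqvGen (Erel q p b) x y := by
  intro b
  induction b with
  | zero =>
    intro _ x y
    show (1 : Equiv.Perm ℕ).SameCycle x y ↔ _
    rw [Equiv.Perm.sameCycle_one]
    constructor
    · rintro rfl; exact EqvGen.refl _
    · intro h
      refine eqvGen_eq_of_untouched (fun z => ⟨?_, ?_⟩) h <;>
        (rintro ⟨j, hj1, hj2, _⟩; omega)
  | succ b ih =>
    intro hb1 x y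
    have hb' : b ≤ q - 1 := by omega
    set x₀ := b + 1 with hx₀
    set y₀ := amod (b + 1 + q - p) q with hy₀
    have hnc : ¬ EqvGen (Erel q p b) x₀ y₀ := by
      have := nc q p (b + 1) hp hpq hcop (by omega) (by omega)
      simpa using this
    have hnsc : ¬ (sigma q p b).SameCycle x₀ y₀ := fun hsc => hnc ((ih hb' x₀ y₀).mp hsc)
    have hσ : sigma q p (b + 1) = Equiv.swap x₀ y₀ * sigma q p b := rfl
    have hmerge : (sigma q p (b + 1)).SameCycle x₀ y₀ := by
      rw [hσ]
      have hq0 : 0 < q := by omega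
      exact mergeA (sigma_periodic (p := p) hq0 (by omega : b ≤ q) x₀) hnsc
    constructor
    · intro hsc
      exact sameCycle_to_eqvGen (edges_step (by omega) (by omega)) hsc
    · intro hgen
      have hedge : ∀ u v, Erel q p (b + 1) u v → (sigma q p (b + 1)).SameCycle u v := by
        intro u v huv
        obtain ⟨j, hj1, hj2, hor⟩ := huv
        by_cases hjb : j ≤ b
        · have hsc : (sigma q p b).SameCycle u v :=
            (ih hb' u v).mpr (EqvGen.rel _ _ ⟨j, hj1, hjb, hor⟩)
          rw [hσ]
          exact mergeB (hσ ▸ hmerge) hsc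
        · have hj : j = b + 1 := by omega
          rcases hor with ⟨hu, hv⟩ | ⟨hu, hv⟩
          · rw [hu, hv, hj]; exact hmerge
          · rw [hu, hv, hj]; exact hmerge.symm
      induction hgen with
      | rel a b' hab => exact hedge _ _ hab
      | refl a => exact Equiv.Perm.SameCycle.refl _ _
      | symm a b' _ ihh => exact ihh.symm
      | trans a b' c _ _ ih1 ih2 => exact ih1.trans ih2

end SigmaLemmas

section Period

lemma isLeast_card (σ : Equiv.Perm ℕ) (s : ℕ) (hper : ∃ k, 0 < k ∧ (σ ^ k) s = s)
    (C : Finset ℕ) (hC : ∀ x, x ∈ C ↔ σ.SameCycle s x) :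
    IsLeast {n : ℤ | 1 ≤ n ∧ (σ ^ n) s = s} ((C.card : ℤ)) := by
  classical
  obtain ⟨k, hk, hfixk⟩ := hper
  have hpp : Function.IsPeriodicPt (⇑σ) k s := by
    show (⇑σ)^[k] s = s
    rw [Equiv.Perm.iterate_eq_pow]
    exact hfixk
  set m := Function.minimalPeriod (⇑σ) s with hm
  have hm0 : 0 < m := hpp.minimalPeriod_pos hk
  have hmfix : (σ ^ m) s = s := by
    rw [← Equiv.Perm.iterate_eq_pow]
    exact Function.iterate_minimalPeriod
  have hzfix : ∀ t : ℤ, (σ ^ ((m : ℤ) * t)) s = s := by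
    intro t
    rw [zpow_mul]
    refine Equiv.Perm.zpow_apply_eq_self_of_apply_eq_self ?_ t
    rw [zpow_natCast]
    exact hmfix
  have hnatper : ∀ n : ℕ, (σ ^ n) s = s → 0 < n → m ≤ n := by
    intro n hn hn0
    refine Function.IsPeriodicPt.minimalPeriod_le hn0 ?_
    show (⇑σ)^[n] s = s
    rw [Equiv.Perm.iterate_eq_pow]
    exact hn
  have himage : C = Finset.image (fun i => (σ ^ i) s) (Finset.range m) := by
    ext x
    rw [hC, Finset.mem_image]
    constructor
    · rintro ⟨i, hi⟩
      refine ⟨(i % (m : ℤ)).toNat, Finset.mem_range.mpr ?_, ?_⟩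
      · have h1 : i % (m : ℤ) < m := Int.emod_lt_of_pos i (by exact_mod_cast hm0)
        have h2 : 0 ≤ i % (m : ℤ) := Int.emod_nonneg i (by exact_mod_cast hm0.ne')
        omega
      · have h2 : 0 ≤ i % (m : ℤ) := Int.emod_nonneg i (by exact_mod_cast hm0.ne')
        have hsplit : i = i % (m : ℤ) + (m : ℤ) * (i / (m : ℤ)) := by
          have := Int.mul_ediv_add_emod i (m : ℤ)
          linarith
        rw [← zpow_natCast, Int.toNat_of_nonneg h2]
        calc (σ ^ (i % (m : ℤ))) s = (σ ^ (i % (m : ℤ))) ((σ ^ ((m : ℤ) * (i / (m : ℤ)))) s) := by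
              rw [hzfix]
          _ = (σ ^ i) s := by rw [← Equiv.Perm.mul_apply, ← zpow_add, ← hsplit]
          _ = x := hi
    · rintro ⟨i, _, hi⟩
      exact ⟨(i : ℤ), by rw [zpow_natCast]; exact hi⟩
  have hinj : Set.InjOn (fun i => (σ ^ i) s) ↑(Finset.range m) := by
    have aux : ∀ i j : ℕ, i ≤ j → j < m → (σ ^ i) s = (σ ^ j) s → i = j := by
      intro i j hij hjm heq
      by_contra hne
      have hlt : 0 < j - i := by omega
      have hsplit : σ ^ j = σ ^ i * σ ^ (j - i) := by
        rw [← pow_add]; congr 1; omega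
      rw [hsplit, Equiv.Perm.mul_apply] at heq
      have := (σ ^ i).injective heq.symm
      have := hnatper (j - i) this hlt
      omega
    intro i hi j hj heq
    simp only [Finset.coe_range, Set.mem_Iio] at hi hj
    rcases le_or_gt i j with h | h
    · exact aux i j h hj heq
    · exact (aux j i (le_of_lt h) hi heq.symm).symm
  have hcard : C.card = m := by
    rw [himage, Finset.card_image_of_injOn hinj, Finset.card_range]
  constructor
  · constructor
    · rw [hcard]; exact_mod_cast hm0
    · rw [hcard, zpow_natCast]
      exact hmfix
  · rintro n ⟨hn1, hnfix⟩
    have hn' : (σ ^ n.toNat) s = s := by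
      rw [← zpow_natCast, Int.toNat_of_nonneg (by omega)]
      exact hnfix
    have := hnatper n.toNat hn' (by omega)
    rw [hcard]
    omega

end Period

-- ===================== counting =====================

section Counting
attribute [local instance] Classical.propDecidable

/-- number of elements of [1,M] congruent to l mod d, where 1 ≤ l ≤ d -/
lemma count_ap {d l M : ℕ} (hd : 0 < d) (hl1 : 1 ≤ l) (hld : l ≤ d) :
    ((Finset.Icc 1 M).filter (fun u => u % d = l % d)).card = (M + d - l) / d := by
  classical
  set K := (M + d - l) / d with hK
  have himg : (Finset.Icc 1 M).filter (fun u => u % d = l % d)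
      = (Finset.range K).image (fun k => l + k * d) := by
    ext u
    simp only [Finset.mem_filter, Finset.mem_Icc, Finset.mem_image, Finset.mem_range]
    constructor
    · rintro ⟨⟨hu1, hu2⟩, hmod⟩
      have hul : l ≤ u := by
        rcases eq_or_lt_of_le hld with rfl | hlt
        · have : u % l = 0 := by rw [hmod, Nat.mod_self]
          exact Nat.le_of_dvd (by omega) (Nat.dvd_of_mod_eq_zero this)
        · have : l % d = l := Nat.mod_eq_of_lt hlt
          rw [this] at hmod
          have := Nat.mod_le u d
          have h2 := Nat.div_add_mod u d
          omega
      have hdvd : d ∣ u - l := by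
        rw [← Nat.modEq_iff_dvd' hul]
        exact hmod.symm
      obtain ⟨c, hc⟩ := hdvd
      have hcc : d * c = c * d := Nat.mul_comm d c
      refine ⟨c, ?_, by omega⟩
      have hcd : c * d ≤ M - l := by omega
      have h2 : c * d ≤ M + d - l - d := by omega
      have : c ≤ (M + d - l - d) / d := (Nat.le_div_iff_mul_le hd).mpr h2
      have h4 : M + d - l = (M + d - l - d) + d := by omega
      have h3 : K = (M + d - l - d) / d + 1 := by
        calc K = ((M + d - l - d) + d) / d := by rw [hK, ← h4]
          _ = (M + d - l - d) / d + 1 := Nat.add_div_right _ hd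
      omega
    · rintro ⟨k, hk, rfl⟩
      have h1 : (k + 1) * d ≤ M + d - l := by
        rw [← Nat.le_div_iff_mul_le hd]
        omega
      have h2 : k * d + d ≤ M + d - l := by
        have : (k + 1) * d = k * d + d := by ring
        omega
      refine ⟨⟨by omega, by omega⟩, ?_⟩
      rw [Nat.add_mul_mod_self_right]
  rw [himg, Finset.card_image_of_injOn, Finset.card_range]
  intro a _ b _ hab
  simp only at hab
  have : a * d = b * d := by omega
  exact Nat.eq_of_mul_eq_mul_right hd this

lemma fdiv_nat (b d : ℕ) (hd : 0 < d) :
    Int.fdiv ((b : ℤ) - 1) (d : ℤ) = (((b + d - 1 : ℕ) / d : ℕ) : ℤ) - 1 := by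
  rw [Int.fdiv_eq_ediv_of_nonneg _ (by positivity)]
  rcases Nat.eq_zero_or_pos b with rfl | hb
  · have h0 : ((0 : ℕ) : ℤ) - 1 = Int.negSucc 0 := rfl
    rw [h0, Int.negSucc_ediv _ (by exact_mod_cast hd)]
    have : (0 + d - 1) / d = 0 := Nat.div_eq_of_lt (by omega)
    rw [this]
    simp [Int.ediv]
  · have h1 : (b : ℤ) - 1 = ((b - 1 : ℕ) : ℤ) := by omega
    rw [h1, ← Int.natCast_ediv]
    have : (b + d - 1) / d = (b - 1) / d + 1 := by
      rw [show b + d - 1 = (b - 1) + d by omega, Nat.add_div_right _ hd]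
    rw [this]
    push_cast
    ring

lemma amod_pred {b d : ℕ} (hb : 1 ≤ b) (hd : 0 < d) : amod b d = (b - 1) % d + 1 := by
  have hB : (b - 1) % d < d := Nat.mod_lt _ hd
  rw [amod_eq_iff hd (by omega) (by omega)]
  have h1 : b = d * ((b - 1) / d) + ((b - 1) % d + 1) := by
    have := Nat.div_add_mod (b - 1) d
    omega
  calc b % d = (d * ((b - 1) / d) + ((b - 1) % d + 1)) % d := by rw [← h1]
    _ = ((b - 1) % d + 1) % d := by rw [Nat.mul_add_mod]

/-- base-level arithmetic (ℕ form) -/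
lemma arith1_nat {b d l : ℕ} (hd : 0 < d) (hl1 : 1 ≤ l) (hld : l ≤ d) :
    (b + d + d - l) / d = if amod b d < l then (b + d - 1) / d else (b + d - 1) / d + 1 := by
  rcases Nat.eq_zero_or_pos b with rfl | hb
  · have hamod : amod 0 d = d := by unfold amod; simp
    have h1 : (0 + d + d - l) / d = 1 := by
      rw [show 0 + d + d - l = (d - l) + d by omega, Nat.add_div_right _ hd,
        Nat.div_eq_of_lt (by omega)]
    have h2 : (0 + d - 1) / d = 0 := Nat.div_eq_of_lt (by omega)
    rw [h1, h2, hamod, if_neg (by omega)]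
  · set A := (b - 1) / d with hA
    set B := (b - 1) % d with hB
    have hBd : B < d := Nat.mod_lt _ hd
    have hb1 : b - 1 = d * A + B := by rw [hA, hB]; exact (Nat.div_add_mod _ _).symm
    have hamod : amod b d = B + 1 := amod_pred hb hd
    have hN2 : (b + d - 1) / d = A + 1 := by
      rw [show b + d - 1 = (B + d * A) + d by omega, Nat.add_div_right _ hd,
        Nat.add_mul_div_left _ _ hd, Nat.div_eq_of_lt hBd]
      omega
    have hN1 : (b + d + d - l) / d = A + 1 + (B + 1 + d - l) / d := by
      rw [show b + d + d - l = ((B + 1 + d - l) + d) + d * A by omega,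
        Nat.add_mul_div_left _ _ hd, Nat.add_div_right _ hd]
      omega
    rw [hN1, hN2, hamod]
    by_cases hcond : B + 1 < l
    · rw [if_pos hcond, Nat.div_eq_of_lt (by omega)]
    · rw [if_neg hcond]
      have : (B + 1 + d - l) / d = 1 := by
        rw [show B + 1 + d - l = (B + 1 - l) + d by omega, Nat.add_div_right _ hd,
          Nat.div_eq_of_lt (by omega)]
      omega

/-- base-level arithmetic: the count of the AP matches the formula -/
lemma arith1 {b d l : ℕ} (hd : 0 < d) (hl1 : 1 ≤ l) (hld : l ≤ d) :
    (((b + d + d - l) / d : ℕ) : ℤ) =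
      if amod b d < l then Int.fdiv ((b : ℤ) - 1) (d : ℤ) + 1
      else Int.fdiv ((b : ℤ) - 1) (d : ℤ) + 2 := by
  rw [arith1_nat hd hl1 hld, fdiv_nat b d hd]
  by_cases hcond : amod b d < l
  · rw [if_pos hcond, if_pos hcond]
    push_cast
    ring
  · rw [if_neg hcond, if_neg hcond]
    push_cast
    ring

/-- fiber sizes of `amod · d` on [1,q] -/
lemma count_fiber {q d t : ℕ} (hd : 0 < d) (ht1 : 1 ≤ t) (htd : t ≤ d) :
    ((Finset.Icc 1 q).filter (fun u => amod u d = t)).card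
      = q / d + (if t ≤ q % d then 1 else 0) := by
  have hcong : (Finset.Icc 1 q).filter (fun u => amod u d = t)
      = (Finset.Icc 1 q).filter (fun u => u % d = t % d) := by
    apply Finset.filter_congr
    intro u _
    rw [amod_eq_iff hd ht1 htd]
  rw [hcong, count_ap hd ht1 htd]
  set A := q / d with hA
  set r := q % d with hr
  have hrd : r < d := Nat.mod_lt _ hd
  have hq : q = d * A + r := by rw [hA, hr]; exact (Nat.div_add_mod _ _).symm
  have hsplit : (q + d - t) / d = (r + d - t) / d + A := by
    rw [show q + d - t = (r + d - t) + d * A by omega, Nat.add_mul_div_left _ _ hd]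
  rw [hsplit]
  by_cases hcond : t ≤ r
  · rw [if_pos hcond]
    have : (r + d - t) / d = 1 := by
      rw [show r + d - t = (r - t) + d by omega, Nat.add_div_right _ hd,
        Nat.div_eq_of_lt (by omega)]
    omega
  · rw [if_neg hcond]
    rw [Nat.div_eq_of_lt (by omega)]
    omega

end Counting

-- ===================== sequences =====================

/-- denominators of the convergents, same shift as `Pseq`: Q_{-2}=1, Q_{-1}=0. -/
def Qseq (q p : ℕ) : ℕ → ℤ
  | 0 => 1
  | 1 => 0
  | n + 2 => (aSeq q p n : ℤ) * Qseq q p (n + 1) + Qseq q p n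

section Shift

variable {q p : ℕ}

lemma qp_shift (hp : 0 < p) (hpq : p < q) :
    ∀ k, qpSeq q p (k + 1) = qpSeq (q - p) ((q - p) - q % (q - p)) k := by
  intro k
  induction k with
  | zero =>
    show ((q - p), q % (q - p)) = ((q - p), (q - p) - ((q - p) - q % (q - p)))
    have : q % (q - p) < q - p := Nat.mod_lt _ (by omega)
    have h2 : (q - p) - ((q - p) - q % (q - p)) = q % (q - p) := by omega
    rw [h2]
  | succ k ih =>
    show ((qpSeq q p (k+1)).2, (qpSeq q p (k+1)).1 % (qpSeq q p (k+1)).2) = _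
    rw [ih]
    rfl

lemma aSeq_shift (hp : 0 < p) (hpq : p < q) (k : ℕ) :
    aSeq q p (k + 1) = aSeq (q - p) ((q - p) - q % (q - p)) k := by
  unfold aSeq
  rw [qp_shift hp hpq]

lemma bSeq_shift (hp : 0 < p) (hpq : p < q) :
    ∀ k, bSeq q p (k + 1) = p + bSeq (q - p) ((q - p) - q % (q - p)) k := by
  intro k
  induction k with
  | zero =>
    show bSeq q p 0 + (q - (q - p)) = p + 0
    simp [bSeq]
    omega
  | succ k ih =>
    show bSeq q p (k + 1) + ((qpSeq q p (k+1)).1 - (qpSeq q p (k+1)).2) = _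
    rw [ih, qp_shift hp hpq]
    show p + bSeq (q-p) ((q-p) - q % (q-p)) k + _ = p + (bSeq (q-p) ((q-p) - q % (q-p)) k + _)
    omega

lemma lSeq_shift (hp : 0 < p) (hpq : p < q) (s : ℕ) :
    ∀ h, lSeq q p s (h + 1) = lSeq (q - p) ((q - p) - q % (q - p)) (amod s (q - p)) h := by
  intro h
  induction h with
  | zero => rfl
  | succ h ih =>
    show amod (lSeq q p s (h + 1)) (qpSeq q p (h+1)).2 = amod (lSeq _ _ _ h) (qpSeq _ _ h).2
    rw [ih, qp_shift hp hpq]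

lemma Pseq_shift (hp : 0 < p) (hpq : p < q) :
    ∀ n, Pseq q p (n + 1) = (aSeq q p 0 : ℤ) * Pseq (q - p) ((q - p) - q % (q - p)) n
      + Qseq (q - p) ((q - p) - q % (q - p)) n := by
  intro n
  induction n using Nat.strong_induction_on with
  | _ n ih =>
    match n with
    | 0 => simp [Pseq, Qseq]
    | 1 => simp [Pseq, Qseq]
    | (n + 2) =>
      show (aSeq q p (n + 1) : ℤ) * Pseq q p (n + 2) + Pseq q p (n + 1) = _
      rw [aSeq_shift hp hpq, ih (n + 1) (by omega), ih n (by omega)]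
      show _ = (aSeq q p 0 : ℤ) * ((aSeq (q-p) _ n : ℤ) * Pseq _ _ (n+1) + Pseq _ _ n)
        + ((aSeq (q-p) _ n : ℤ) * Qseq _ _ (n+1) + Qseq _ _ n)
      ring

lemma Qseq_shift (hp : 0 < p) (hpq : p < q) :
    ∀ n, Qseq q p (n + 1) = Pseq (q - p) ((q - p) - q % (q - p)) n := by
  intro n
  induction n using Nat.strong_induction_on with
  | _ n ih =>
    match n with
    | 0 => simp [Pseq, Qseq]
    | 1 => simp [Pseq, Qseq, aSeq]
    | (n + 2) =>
      show (aSeq q p (n + 1) : ℤ) * Qseq q p (n + 2) + Qseq q p (n + 1) = _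
      rw [aSeq_shift hp hpq, ih (n + 1) (by omega), ih n (by omega)]
      rfl

lemma bSeq_mono : ∀ k k' : ℕ, k ≤ k' → bSeq q p k ≤ bSeq q p k' := by
  intro k k' hkk
  induction k' with
  | zero =>
    have : k = 0 := by omega
    rw [this]
  | succ k' ih =>
    rcases Nat.lt_or_ge k (k' + 1) with h | h
    · exact le_trans (ih (by omega)) (Nat.le_add_right _ _)
    · have : k = k' + 1 := by omega
      rw [this]
end Shift

-- ===================== main induction =====================

def Xval (q p b h : ℕ) : ℤ :=
  Int.fdiv ((b : ℤ) - (bSeq q p h : ℤ) - 1) ((qpSeq q p h).2 : ℤ)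

def Lform (q p b h s : ℕ) : ℤ :=
  if lSeq q p s h ≤ b - bSeq q p h + (qpSeq q p h).2 then
    if amod (b - bSeq q p h) (qpSeq q p h).2 < amod (lSeq q p s h) (qpSeq q p h).2 then
      Pseq q p h + (Xval q p b h + 1) * Pseq q p (h + 1)
    else Pseq q p h + (Xval q p b h + 2) * Pseq q p (h + 1)
  else Pseq q p (h + 1)

def Nform (q p b h s : ℕ) : ℤ :=
  if lSeq q p s h ≤ b - bSeq q p h + (qpSeq q p h).2 then
    if amod (b - bSeq q p h) (qpSeq q p h).2 < amod (lSeq q p s h) (qpSeq q p h).2 then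
      Qseq q p h + (Xval q p b h + 1) * Qseq q p (h + 1)
    else Qseq q p h + (Xval q p b h + 2) * Qseq q p (h + 1)
  else Qseq q p (h + 1)


lemma form_shift {q p : ℕ} (hp : 0 < p) (hpq : p < q) {b c h' s : ℕ}
    (hbc : b = p + c) (hble : bSeq (q - p) ((q - p) - q % (q - p)) h' ≤ c) :
    Lform q p b (h' + 1) s
      = ((q / (q - p) : ℕ) : ℤ)
          * Lform (q - p) ((q - p) - q % (q - p)) c h' (amod s (q - p))
        + Nform (q - p) ((q - p) - q % (q - p)) c h' (amod s (q - p))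
    ∧ Nform q p b (h' + 1) s
      = Lform (q - p) ((q - p) - q % (q - p)) c h' (amod s (q - p)) := by
  have e1 := lSeq_shift hp hpq s h'
  have e2 := qp_shift hp hpq h'
  have e3 := bSeq_shift hp hpq h'
  have e4 : b - bSeq q p (h' + 1) = c - bSeq (q - p) ((q - p) - q % (q - p)) h' := by
    rw [e3]; omega
  have e5 : (b : ℤ) - (bSeq q p (h' + 1) : ℤ) - 1
      = (c : ℤ) - (bSeq (q - p) ((q - p) - q % (q - p)) h' : ℤ) - 1 := by
    rw [e3]; push_cast; omega
  have eX : Xval q p b (h' + 1) = Xval (q - p) ((q - p) - q % (q - p)) c h' := by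
    unfold Xval; rw [e5, e2]
  have eP1 := Pseq_shift hp hpq (h' + 1)
  have eP0 := Pseq_shift hp hpq h'
  have eQ1 := Qseq_shift hp hpq (h' + 1)
  have eQ0 := Qseq_shift hp hpq h'
  have ea : aSeq q p 0 = q / (q - p) := rfl
  rw [ea] at eP1 eP0
  unfold Lform Nform
  rw [e1, e2, e4, eX, eP0, eP1, eQ0, eQ1]
  constructor
  · split_ifs <;> ring
  · split_ifs <;> ring

section MainSect
attribute [local instance] Classical.propDecidable

theorem main : ∀ q p b h s : ℕ, 0 < p → p < q → Nat.Coprime p q → b ≤ q - 1 →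
    bSeq q p h ≤ b → b < bSeq q p (h + 1) → 1 ≤ s → s ≤ q →
    ((((Finset.Icc 1 q).filter (fun x => EqvGen (Erel q p b) s x)).card : ℤ)
        = Lform q p b h s
    ∧ (((Finset.Icc 1 (q - p)).filter (fun x => EqvGen (Erel q p b) s x)).card : ℤ)
        = Nform q p b h s) := by
  intro q
  induction q using Nat.strong_induction_on with
  | _ q IH =>
  intro p b h s hp hpq hcop hb hh1 hh2 hs1 hs2
  have hd1 : 1 ≤ q - p := by omega
  have hbSeq1 : bSeq q p 1 = p := by
    show bSeq q p 0 + (q - (q - p)) = p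
    show 0 + (q - (q - p)) = p
    omega
  by_cases hbp : b < p
  · -- base case, level 0
    have h0 : h = 0 := by
      by_contra hne
      have := bSeq_mono (q := q) (p := p) 1 h (by omega)
      omega
    subst h0
    have e2 : (qpSeq q p 0).2 = q - p := rfl
    have e3 : lSeq q p s 0 = s := rfl
    have eL : Lform q p b 0 s =
        if s ≤ b + (q - p) then
          (if amod b (q - p) < amod s (q - p) then Int.fdiv ((b : ℤ) - 1) ((q - p : ℕ) : ℤ) + 1
           else Int.fdiv ((b : ℤ) - 1) ((q - p : ℕ) : ℤ) + 2)
        else 1 := by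
      unfold Lform Xval
      rw [e2, e3, show bSeq q p 0 = 0 from rfl, Nat.sub_zero,
        show Pseq q p 0 = 0 from rfl, show Pseq q p 1 = 1 from rfl]
      have ecast : (b : ℤ) - ((0 : ℕ) : ℤ) - 1 = (b : ℤ) - 1 := by push_cast; ring
      rw [ecast]
      split
      · split <;> ring
      · rfl
    have eN : Nform q p b 0 s =
        if s ≤ b + (q - p) then 1 else 0 := by
      unfold Nform Xval
      rw [e2, e3, show bSeq q p 0 = 0 from rfl, Nat.sub_zero,
        show Qseq q p 0 = 1 from rfl, show Qseq q p 1 = 0 from rfl]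
      split
      · split <;> ring
      · rfl
    rw [eL, eN]
    by_cases hcase : s ≤ b + (q - p)
    · rw [if_pos hcase, if_pos hcase]
      set l := amod s (q - p) with hl
      have hl1 : 1 ≤ l := amod_pos hd1
      have hld : l ≤ q - p := amod_le hd1
      have hlmod : l % (q - p) = s % (q - p) := amod_mod
      constructor
      · have hfil : (Finset.Icc 1 q).filter (fun x => EqvGen (Erel q p b) s x)
            = (Finset.Icc 1 (b + (q - p))).filter (fun u => u % (q - p) = l % (q - p)) := by
          ext u
          simp only [Finset.mem_filter, Finset.mem_Icc]
          rw [base_eqv hp hpq hbp s u, hlmod]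
          constructor
          · rintro ⟨⟨hu1, huq⟩, (rfl | ⟨_, _, h3, h4, h5⟩)⟩
            · exact ⟨⟨hu1, hcase⟩, rfl⟩
            · exact ⟨⟨h3, h4⟩, h5.symm⟩
          · rintro ⟨⟨hu1, hubd⟩, hmod⟩
            exact ⟨⟨hu1, by omega⟩, Or.inr ⟨hs1, hcase, hu1, hubd, hmod.symm⟩⟩
        rw [hfil, count_ap hd1 hl1 hld]
        exact arith1 hd1 hl1 hld
      · have hfil : (Finset.Icc 1 (q - p)).filter (fun x => EqvGen (Erel q p b) s x)
            = (Finset.Icc 1 (q - p)).filter (fun u => u % (q - p) = l % (q - p)) := by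
          apply Finset.filter_congr
          intro u hu
          rw [Finset.mem_Icc] at hu
          rw [base_eqv hp hpq hbp s u, hlmod]
          constructor
          · rintro (rfl | ⟨_, _, _, _, h5⟩)
            · exact rfl
            · exact h5.symm
          · intro hmod
            exact Or.inr ⟨hs1, hcase, hu.1, by omega, hmod.symm⟩
        rw [hfil, count_ap hd1 hl1 hld]
        have : (q - p + (q - p) - l) / (q - p) = 1 := by
          rw [show q - p + (q - p) - l = ((q - p) - l) + (q - p) by omega,
            Nat.add_div_right _ hd1, Nat.div_eq_of_lt (by omega)]
        rw [this]
        rfl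
    · rw [if_neg hcase, if_neg hcase]
      constructor
      · have hfil : (Finset.Icc 1 q).filter (fun x => EqvGen (Erel q p b) s x) = {s} := by
          ext u
          simp only [Finset.mem_filter, Finset.mem_Icc, Finset.mem_singleton]
          rw [base_eqv hp hpq hbp s u]
          constructor
          · rintro ⟨_, (rfl | ⟨_, h2, _, _, _⟩)⟩
            · rfl
            · omega
          · rintro rfl
            exact ⟨⟨hs1, hs2⟩, Or.inl rfl⟩
        rw [hfil]
        rfl
      · have hfil : (Finset.Icc 1 (q - p)).filter (fun x => EqvGen (Erel q p b) s x) = ∅ := by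
          ext u
          simp only [Finset.mem_filter, Finset.mem_Icc, Finset.notMem_empty, iff_false]
          rintro ⟨⟨hu1, hud⟩, hgen⟩
          rw [base_eqv hp hpq hbp s u] at hgen
          rcases hgen with rfl | ⟨_, h2, _, _, _⟩ <;> omega
        rw [hfil]
        rfl
  · -- b ≥ p
    push_neg at hbp
    by_cases hd2 : 2 ≤ q - p
    · -- renormalization case
      set c := b - p with hcdef
      have hbc : b = p + c := by omega
      have hc : c ≤ (q - p) - 1 := by omega
      have hrlt : q % (q - p) < q - p := Nat.mod_lt _ (by omega)
      -- coprimality of the renormalized data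
      have hdq : Nat.Coprime (q - p) q := by
        have h1 : Nat.Coprime (q - p) p :=
          (Nat.coprime_sub_self_left (le_of_lt hpq)).mpr hcop.symm
        have h2 : q = p + (q - p) := by omega
        have h3 : Nat.Coprime (q - p) (p + (q - p)) := Nat.coprime_add_self_right.mpr h1
        rwa [← h2] at h3
      have hrdco : Nat.Coprime (q % (q - p)) (q - p) := by
        unfold Nat.Coprime
        rw [← Nat.gcd_rec]
        exact hdq
      have hr1 : 1 ≤ q % (q - p) := by
        rcases Nat.eq_zero_or_pos (q % (q - p)) with h0 | hpos
        · exfalso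
          have := hrdco
          rw [h0] at this
          have : q - p = 1 := by simpa [Nat.Coprime] using this
          omega
        · exact hpos
      have hp'1 : 0 < (q - p) - q % (q - p) := by omega
      have hp'd : (q - p) - q % (q - p) < q - p := by omega
      have hcop' : Nat.Coprime ((q - p) - q % (q - p)) (q - p) := by
        have h1 : Nat.Coprime ((q - p) - q % (q - p)) (q % (q - p)) :=
          (Nat.coprime_sub_self_left (le_of_lt hrlt)).mpr hrdco.symm
        have h2 : q - p = q % (q - p) + ((q - p) - q % (q - p)) := by omega
        have h3 : Nat.Coprime ((q - p) - q % (q - p)) (q % (q - p) + ((q - p) - q % (q - p))) :=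
          Nat.coprime_add_self_right.mpr h1
        rwa [← h2] at h3
      -- h ≥ 1
      obtain ⟨h', rfl⟩ : ∃ h', h = h' + 1 := by
        rcases h with _ | h'
        · exfalso
          rw [show (0 : ℕ) + 1 = 1 from rfl, hbSeq1] at hh2
          omega
        · exact ⟨h', rfl⟩
      -- transfer the level hypotheses
      have e3 := bSeq_shift hp hpq (q := q) h'
      have e3' := bSeq_shift hp hpq (q := q) (h' + 1)
      have hh1' : bSeq (q - p) ((q - p) - q % (q - p)) h' ≤ c := by
        rw [e3] at hh1; omega
      have hh2' : c < bSeq (q - p) ((q - p) - q % (q - p)) (h' + 1) := by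
        rw [e3'] at hh2; omega
      have ht1 : 1 ≤ amod s (q - p) := amod_pos (by omega)
      have htd : amod s (q - p) ≤ q - p := amod_le (by omega)
      obtain ⟨IH1, IH2⟩ := IH (q - p) (by omega) ((q - p) - q % (q - p)) c h'
        (amod s (q - p)) hp'1 hp'd hcop' (by omega) hh1' hh2' ht1 htd
      -- the renormalized cycle set
      set t := amod s (q - p) with htdef
      set C' := (Finset.Icc 1 (q - p)).filter
        (fun u => EqvGen (Erel (q - p) ((q - p) - q % (q - p)) c) t u) with hC'
      have hgeq : ∀ u, 1 ≤ u → u ≤ q →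
          (EqvGen (Erel q p b) s u ↔
            EqvGen (Erel (q - p) ((q - p) - q % (q - p)) c) t (amod u (q - p))) := by
        intro u hu1 huq
        rw [hbc]
        exact geq hp hpq hc hs1 hs2 hu1 huq
      -- N-part: the filter over [1, q-p] is exactly C'
      have hNfil : (Finset.Icc 1 (q - p)).filter (fun x => EqvGen (Erel q p b) s x) = C' := by
        rw [hC']
        apply Finset.filter_congr
        intro u hu
        rw [Finset.mem_Icc] at hu
        rw [hgeq u hu.1 (by omega), amod_of_le hu.1 hu.2]
      -- L-part: fiberwise count
      have hmaps : ∀ x ∈ (Finset.Icc 1 q).filter (fun x => EqvGen (Erel q p b) s x),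
          amod x (q - p) ∈ C' := by
        intro x hx
        rw [Finset.mem_filter, Finset.mem_Icc] at hx
        rw [hC', Finset.mem_filter, Finset.mem_Icc]
        exact ⟨⟨amod_pos (by omega), amod_le (by omega)⟩,
          (hgeq x hx.1.1 hx.1.2).mp hx.2⟩
      have hsum := Finset.card_eq_sum_card_fiberwise hmaps
      have hfib : ∀ t' ∈ C',
          (((Finset.Icc 1 q).filter (fun x => EqvGen (Erel q p b) s x)).filter
            (fun u => amod u (q - p) = t')).card
          = q / (q - p) + (if t' ≤ q % (q - p) then 1 else 0) := by
        intro t' ht'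
        rw [hC', Finset.mem_filter, Finset.mem_Icc] at ht'
        have heq : ((Finset.Icc 1 q).filter (fun x => EqvGen (Erel q p b) s x)).filter
            (fun u => amod u (q - p) = t') = (Finset.Icc 1 q).filter
            (fun u => amod u (q - p) = t') := by
          rw [Finset.filter_filter]
          apply Finset.filter_congr
          intro u hu
          rw [Finset.mem_Icc] at hu
          constructor
          · rintro ⟨_, hm⟩; exact hm
          · intro hm
            refine ⟨?_, hm⟩
            rw [hgeq u hu.1 hu.2, hm]
            exact ht'.2
        rw [heq]
        exact count_fiber (by omega) ht'.1.1 ht'.1.2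
      have hcards : ((Finset.Icc 1 q).filter (fun x => EqvGen (Erel q p b) s x)).card
          = (q / (q - p)) * C'.card + (C'.filter (fun u => u ≤ q % (q - p))).card := by
        rw [hsum, Finset.sum_congr rfl hfib, Finset.sum_add_distrib,
          Finset.sum_const, smul_eq_mul, Finset.sum_boole]
        push_cast
        ring
      have hEfil : C'.filter (fun u => u ≤ q % (q - p))
          = (Finset.Icc 1 ((q - p) - ((q - p) - q % (q - p)))).filter
            (fun u => EqvGen (Erel (q - p) ((q - p) - q % (q - p)) c) t u) := by
        have hsub : (q - p) - ((q - p) - q % (q - p)) = q % (q - p) := by omega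
        rw [hsub, hC']
        ext u
        simp only [Finset.mem_filter, Finset.mem_Icc]
        constructor
        · rintro ⟨⟨⟨hu1, _⟩, hgen⟩, hur⟩
          exact ⟨⟨hu1, hur⟩, hgen⟩
        · rintro ⟨⟨hu1, hur⟩, hgen⟩
          exact ⟨⟨⟨hu1, by omega⟩, hgen⟩, hur⟩
      obtain ⟨hF1, hF2⟩ := form_shift hp hpq hbc hh1' (s := s)
      constructor
      · rw [hcards, hF1]
        push_cast
        rw [← IH1, ← IH2, ← hEfil]
      · rw [hNfil, hF2, ← IH1]
    · -- q - p = 1, b = q - 1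
      have hdq : q - p = 1 := by omega
      have hbq : b = q - 1 := by omega
      have hqp1a : (qpSeq q p 1).1 = 1 := by
        show (qpSeq q p 0).2 = 1
        exact hdq
      have hqp1b : (qpSeq q p 1).2 = 0 := by
        show (qpSeq q p 0).1 % (qpSeq q p 0).2 = 0
        show q % (q - p) = 0
        rw [hdq, Nat.mod_one]
      have hbSeq2 : bSeq q p 2 = q := by
        show bSeq q p 1 + ((qpSeq q p 1).1 - (qpSeq q p 1).2) = q
        rw [hbSeq1, hqp1a, hqp1b]
        omega
      have h1 : h = 1 := by
        by_contra hne
        rcases Nat.lt_or_ge h 1 with hlt | hge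
        · have h0 : h = 0 := by omega
          rw [h0, show (0 : ℕ) + 1 = 1 from rfl, hbSeq1] at hh2
          omega
        · have hge2 : 2 ≤ h := by omega
          have := bSeq_mono (q := q) (p := p) 2 h hge2
          rw [hbSeq2] at this
          omega
      subst h1
      have el1 : lSeq q p s 1 = 1 := by
        show amod (lSeq q p s 0) (qpSeq q p 0).2 = 1
        show amod s (q - p) = 1
        rw [hdq]
        unfold amod
        simp [Nat.mod_one]
      have hcondF : ¬ (lSeq q p s 1 ≤ b - bSeq q p 1 + (qpSeq q p 1).2) := by
        rw [el1, hbSeq1, hqp1b]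
        omega
      have ea0 : aSeq q p 0 = q := by
        show q / (q - p) = q
        rw [hdq, Nat.div_one]
      have eP2 : Pseq q p 2 = (q : ℤ) := by
        show (aSeq q p 0 : ℤ) * Pseq q p 1 + Pseq q p 0 = (q : ℤ)
        rw [show Pseq q p 1 = 1 from rfl, show Pseq q p 0 = 0 from rfl, ea0]
        ring
      have eQ2 : Qseq q p 2 = 1 := by
        show (aSeq q p 0 : ℤ) * Qseq q p 1 + Qseq q p 0 = 1
        rw [show Qseq q p 1 = 0 from rfl, show Qseq q p 0 = 1 from rfl]
        ring
      have hconn : ∀ u, 1 ≤ u → u ≤ q → EqvGen (Erel q p b) s u := by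
        intro u hu1 huq
        have h1 := fib_conn (b := b) hp hpq u hu1 huq (by omega)
        have h2 := fib_conn (b := b) hp hpq s hs1 hs2 (by omega)
        have ha : ∀ v : ℕ, amod v (q - p) = amod v 1 := by intro v; rw [hdq]
        have hb1 : ∀ v : ℕ, amod v 1 = 1 := by
          intro v
          unfold amod
          simp [Nat.mod_one]
        rw [ha, hb1] at h1 h2
        exact h2.trans _ _ _ (h1.symm _ _)
      constructor
      · have hfull : (Finset.Icc 1 q).filter (fun x => EqvGen (Erel q p b) s x)
            = Finset.Icc 1 q := by
          apply Finset.filter_true_of_mem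
          intro u hu
          rw [Finset.mem_Icc] at hu
          exact hconn u hu.1 hu.2
        rw [hfull, Nat.card_Icc]
        unfold Lform
        rw [if_neg hcondF, eP2]
        omega
      · have hone : (Finset.Icc 1 (q - p)).filter (fun x => EqvGen (Erel q p b) s x)
            = {1} := by
          rw [hdq]
          ext u
          simp only [Finset.mem_filter, Finset.mem_Icc, Finset.mem_singleton]
          constructor
          · rintro ⟨⟨h1, h2⟩, _⟩; omega
          · rintro rfl
            exact ⟨⟨le_refl _, le_refl _⟩, hconn 1 (le_refl _) (by omega)⟩
        rw [hone]
        unfold Nform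
        rw [if_neg hcondF, eQ2]
        rfl

end MainSect

/-- The period formula: the period of the s-th root of the curve
(w-1)^(q-p) w^p ξ^q = 1 along a circle enclosing the first b branch points. -/
theorem period_formula_rational (p q : ℕ) (hcop : Nat.Coprime p q) (hp : 0 < p)
    (hpq : p < q) (b : ℕ) (hb : b ≤ q - 1) (s : ℕ) (hs1 : 1 ≤ s) (hs2 : s ≤ q)
    (h : ℕ) (hh1 : bSeq q p h ≤ b) (hh2 : b < bSeq q p (h + 1)) :
    IsLeast {n : ℤ | 1 ≤ n ∧ ((sigma q p b) ^ n) s = s}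
      (if lSeq q p s h ≤ b - bSeq q p h + (qpSeq q p h).2 then
        (if amod (b - bSeq q p h) (qpSeq q p h).2
            < amod (lSeq q p s h) (qpSeq q p h).2 then
          Pseq q p h
            + (Int.fdiv ((b : ℤ) - (bSeq q p h : ℤ) - 1) ((qpSeq q p h).2 : ℤ) + 1)
              * Pseq q p (h + 1)
        else
          Pseq q p h
            + (Int.fdiv ((b : ℤ) - (bSeq q p h : ℤ) - 1) ((qpSeq q p h).2 : ℤ) + 2)
              * Pseq q p (h + 1))
      else Pseq q p (h + 1)) := by
  classical
  have hq0 : 0 < q := by omega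
  obtain ⟨hL, _⟩ := main q p b h s hp hpq hcop hb hh1 hh2 hs1 hs2
  have hrange : ∀ x, Relation.EqvGen (Erel q p b) s x → 1 ≤ x ∧ x ≤ q := by
    have haux : ∀ x y, Relation.EqvGen (Erel q p b) x y →
        (x = y ∨ (1 ≤ x ∧ x ≤ q ∧ 1 ≤ y ∧ y ≤ q)) := by
      intro x y hxy
      induction hxy with
      | rel a b' hab =>
        obtain ⟨j, hj1, hj2, hor⟩ := hab
        have hjq : j ≤ q := by omega
        have := amod_pos (a := j + q - p) hq0
        have := amod_le (a := j + q - p) hq0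
        rcases hor with ⟨ha, hb2⟩ | ⟨ha, hb2⟩ <;> (right; constructor <;> omega)
      | refl a => exact Or.inl rfl
      | symm a b' _ ih => rcases ih with rfl | ⟨h1, h2, h3, h4⟩
                          · exact Or.inl rfl
                          · exact Or.inr ⟨h3, h4, h1, h2⟩
      | trans a b' c _ _ ih1 ih2 =>
        rcases ih1 with rfl | ⟨h1, h2, h3, h4⟩
        · exact ih2
        · rcases ih2 with rfl | ⟨g1, g2, g3, g4⟩
          · exact Or.inr ⟨h1, h2, h3, h4⟩
          · exact Or.inr ⟨h1, h2, g3, g4⟩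
    intro x hx
    rcases haux s x hx with rfl | ⟨_, _, h3, h4⟩
    · exact ⟨hs1, hs2⟩
    · exact ⟨h3, h4⟩
  have hmem : ∀ x, x ∈ (Finset.Icc 1 q).filter (fun x => Relation.EqvGen (Erel q p b) s x)
      ↔ (sigma q p b).SameCycle s x := by
    intro x
    rw [Finset.mem_filter, Finset.mem_Icc]
    constructor
    · rintro ⟨_, hgen⟩
      exact (sc_iff hp hpq hcop b hb s x).mpr hgen
    · intro hsc
      have hgen := (sc_iff hp hpq hcop b hb s x).mp hsc
      exact ⟨hrange x hgen, hgen⟩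
  have hleast := isLeast_card (sigma q p b) s (sigma_periodic hq0 (by omega) s) _ hmem
  rw [hL] at hleast
  have hform : Lform q p b h s =
      (if lSeq q p s h ≤ b - bSeq q p h + (qpSeq q p h).2 then
        (if amod (b - bSeq q p h) (qpSeq q p h).2
            < amod (lSeq q p s h) (qpSeq q p h).2 then
          Pseq q p h
            + (Int.fdiv ((b : ℤ) - (bSeq q p h : ℤ) - 1) ((qpSeq q p h).2 : ℤ) + 1)
              * Pseq q p (h + 1)
        else
          Pseq q p h
            + (Int.fdiv ((b : ℤ) - (bSeq q p h : ℤ) - 1) ((qpSeq q p h).2 : ℤ) + 2)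
              * Pseq q p (h + 1))
      else Pseq q p (h + 1)) := by
    unfold Lform Xval
    rfl
  rw [hform] at hleast
  exact hleast
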